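/- Let A be a finite-dimensional algebra over a field such that the trace of the regular representation of A is nondegenerate. Then every finite-dimensional A-module is completely decomposable (a direct sum of simple modules). -/

import Mathlib

section Aux

variable {A : Type} [Ring A]

/-- Elements of the Jacobson radical annihilate simple modules. -/
lemma aux_jacobson_smul_simple_eq_zero {b : A}
    (hb : b ∈ Ideal.jacobson (⊥ : Ideal A))
    {S : Type} [AddCommGroup S] [Module A S] [IsSimpleModule A S] (s : S) :
    b • s = 0 := by
  rcases eq_or_ne s 0 with rfl | hs
  · simp
  · have hmax := IsSimpleModule.ker_toSpanSingleton_isMaximal A hs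
    have hmem : b ∈ LinearMap.ker (LinearMap.toSpanSingleton A S s) :=
      Ideal.mem_sInf.mp hb ⟨bot_le, hmax⟩
    simpa using hmem

/-- The Jacobson radical is closed under right multiplication. -/
lemma aux_mul_mem_jacobson {b : A} (hb : b ∈ Ideal.jacobson (⊥ : Ideal A)) (c : A) :
    b * c ∈ Ideal.jacobson (⊥ : Ideal A) := by
  refine Ideal.mem_sInf.mpr ?_
  rintro m ⟨-, hm⟩
  haveI : IsSimpleModule A (A ⧸ m) :=
    isSimpleModule_iff_isCoatom.mpr (Ideal.isMaximal_def.mp hm)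
  have h := aux_jacobson_smul_simple_eq_zero hb (Submodule.Quotient.mk c : A ⧸ m)
  rw [← Submodule.Quotient.mk_smul, smul_eq_mul] at h
  exact (Submodule.Quotient.mk_eq_zero m).mp h

/-- In a left-Artinian ring, elements of the Jacobson radical are nilpotent. -/
lemma aux_jacobson_isNilpotent [IsArtinian A A] {b : A}
    (hb : b ∈ Ideal.jacobson (⊥ : Ideal A)) : IsNilpotent b := by
  have hanti : ∀ k : ℕ, (Ideal.span {b ^ (k + 1)} : Ideal A) ≤ Ideal.span {b ^ k} := by
    intro k
    rw [Ideal.span_le, Set.singleton_subset_iff, SetLike.mem_coe]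
    exact Submodule.mem_span_singleton.mpr ⟨b, by rw [smul_eq_mul, ← pow_succ']⟩
  let f : ℕ →o (Ideal A)ᵒᵈ :=
    ⟨fun k => Ideal.span {b ^ k}, monotone_nat_of_le_succ fun k => hanti k⟩
  obtain ⟨n, hn⟩ := IsArtinian.monotone_stabilizes f
  have hb' : b ^ n ∈ (Ideal.span {b ^ (n + 1)} : Ideal A) := by
    have : f n = f (n + 1) := hn (n + 1) (Nat.le_succ n)
    have h' : (Ideal.span {b ^ n} : Ideal A) = Ideal.span {b ^ (n + 1)} := this
    rw [← h']
    exact Ideal.subset_span rfl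
  obtain ⟨x, hx⟩ := Submodule.mem_span_singleton.mp hb'
  -- hx : x • b ^ (n + 1) = b ^ n
  have key : (1 - x * b) * b ^ n = 0 := by
    have : x * b ^ (n + 1) = x * b * b ^ n := by rw [pow_succ', ← mul_assoc]
    rw [sub_mul, one_mul, ← this]
    rw [smul_eq_mul] at hx
    rw [hx, sub_self]
  have hxb : x * b ∈ Ideal.jacobson (⊥ : Ideal A) := by
    have := Ideal.jacobson (⊥ : Ideal A) |>.smul_mem x hb
    simpa using this
  -- `1 - x * b` has a left inverse
  have hunit : (1 : A) ∈ Ideal.span {1 - x * b} := by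
    by_contra h1
    have hne : (Ideal.span {1 - x * b} : Ideal A) ≠ ⊤ := by
      intro h
      exact h1 (h ▸ Submodule.mem_top)
    obtain ⟨m, hmmax, hle⟩ := Ideal.exists_le_maximal _ hne
    have h2 : (1 - x * b) ∈ m := hle (Ideal.subset_span rfl)
    have h3 : x * b ∈ m := Ideal.mem_sInf.mp hxb ⟨bot_le, hmmax⟩
    have : (1 : A) ∈ m := by
      have := m.add_mem h2 h3
      simpa using this
    exact hmmax.ne_top (Ideal.eq_top_iff_one m |>.mpr this)
  obtain ⟨u, hu⟩ := Submodule.mem_span_singleton.mp hunit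
  rw [smul_eq_mul] at hu
  refine ⟨n, ?_⟩
  calc b ^ n = 1 * b ^ n := (one_mul _).symm
    _ = u * (1 - x * b) * b ^ n := by rw [hu]
    _ = u * ((1 - x * b) * b ^ n) := by rw [mul_assoc]
    _ = 0 := by rw [key, mul_zero]

end Aux

/-- Maschke-type theorem: if `A` is a finite-dimensional algebra over a field
`F` such that the trace of the regular representation of `A` is nondegenerate,
then every finite-dimensional `A`-module is completely decomposable
(semisimple). -/
theorem maschke_of_nondegenerate_regular_trace
    (F A : Type) [Field F] [Ring A] [Algebra F A] [FiniteDimensional F A]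
    (hnd : ∀ a : A, a ≠ 0 →
      ∃ c : A, LinearMap.trace F A (LinearMap.mulLeft F (a * c)) ≠ 0) :
    ∀ (M : Type) [AddCommGroup M] [Module A M] [Module F M]
      [IsScalarTower F A M] [FiniteDimensional F M],
      IsSemisimpleModule A M := by
  haveI : IsArtinian A A := isArtinian_of_tower F inferInstance
  -- trace of left multiplication by a radical element vanishes
  have htr : ∀ b ∈ Ideal.jacobson (⊥ : Ideal A),
      LinearMap.trace F A (LinearMap.mulLeft F b) = 0 := by
    intro b hb
    obtain ⟨n, hn⟩ := aux_jacobson_isNilpotent hb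
    have hnil : IsNilpotent (LinearMap.mulLeft F b) :=
      ⟨n, by rw [LinearMap.pow_mulLeft, hn]; ext x; simp⟩
    exact (LinearMap.isNilpotent_trace_of_isNilpotent hnil).eq_zero
  -- the Jacobson radical is trivial
  have hJ : Ideal.jacobson (⊥ : Ideal A) = ⊥ := by
    rw [eq_bot_iff]
    intro b hb
    rw [Submodule.mem_bot]
    by_contra hb0
    obtain ⟨c, hc⟩ := hnd b hb0
    exact hc (htr _ (aux_mul_mem_jacobson hb c))
  haveI : IsSemisimpleRing A := by
    rcases subsingleton_or_nontrivial A with hsub | hnt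
    · exact { toComplementedLattice := ⟨fun x => ⟨⊥, disjoint_bot_right, codisjoint_bot.mpr (Subsingleton.elim x ⊤)⟩⟩ }
    · classical
      -- a minimal finite intersection of maximal left ideals
      set 𝒮 : Set (Ideal A) :=
        {I | ∃ s : Finset (Ideal A), (∀ m ∈ s, m.IsMaximal) ∧ I = s.inf id} with h𝒮
      have hne : 𝒮.Nonempty := ⟨⊤, ∅, by simp, by simp⟩
      obtain ⟨I₀, ⟨s₀, hs₀max, hI₀⟩, hmin⟩ := IsArtinian.set_has_minimal 𝒮 hne
      have hbot : s₀.inf id = ⊥ := by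
        rw [← le_bot_iff, ← hJ]
        refine le_sInf ?_
        rintro m ⟨-, hm⟩
        have hmem : I₀ ⊓ m ∈ 𝒮 := by
          refine ⟨insert m s₀, ?_, ?_⟩
          · intro x hx
            rcases Finset.mem_insert.mp hx with rfl | hx
            · exact hm
            · exact hs₀max x hx
          · rw [Finset.inf_insert, ← hI₀, id, inf_comm]
        have heq : I₀ ⊓ m = I₀ :=
          (inf_le_left.lt_or_eq.resolve_left (hmin _ hmem))
        calc s₀.inf id = I₀ := hI₀.symm
          _ = I₀ ⊓ m := heq.symm
          _ ≤ m := inf_le_right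
      -- embed `A` into a product of simple modules
      haveI hsimp : ∀ i : s₀, IsSimpleModule A (A ⧸ (i : Ideal A)) := fun i =>
        isSimpleModule_iff_isCoatom.mpr (Ideal.isMaximal_def.mp (hs₀max i i.2))
      let f : A →ₗ[A] ((i : s₀) → A ⧸ (i : Ideal A)) :=
        LinearMap.pi fun i => (i : Ideal A).mkQ
      have hker : LinearMap.ker f = ⊥ := by
        rw [LinearMap.ker_pi]
        simp only [Submodule.ker_mkQ]
        rw [← hbot, Finset.inf_eq_iInf]
        exact iInf_subtype
      haveI : IsSemisimpleModule A ((i : s₀) → A ⧸ (i : Ideal A)) := by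
        refine isSemisimpleModule_of_isSemisimpleModule_submodule'
          (p := fun i => LinearMap.range (LinearMap.single A _ i)) (fun i => ?_) ?_
        · exact IsSemisimpleModule.range _
        · simp_rw [LinearMap.range_eq_map, Submodule.iSup_map_single, Submodule.pi_top]
      have hinj : Function.Injective f := LinearMap.ker_eq_bot.mp hker
      exact IsSemisimpleModule.congr (M := ↥(LinearMap.range f)) (LinearEquiv.ofInjective f hinj)
  intro M _ _ _ _ _
  infer_instance
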